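/- For every α ≥ β₀*, every x₂ > 0 and every x₁ ≥ α x₂, one has (μ_A − δ) x₁ + (δ − μ_L) α x₂ + (μ_L − δ) G(α x₂, x₂; α) ≤ 0. (This is the key inequality showing that the generator acting on the value function of the barrier strategy at level α is nonpositive above the barrier.) -/

import Mathlib

/-- The value function `G(x₁, x₂; β)` of the barrier strategy with barrier `β`
and ruin level `α₀`. -/
noncomputable def Gb (α₀ ζ₁ ζ₂ β x₁ x₂ : ℝ) : ℝ :=
  α₀ * x₂ * ((x₁ / (α₀ * x₂)) ^ ζ₁ - (x₁ / (α₀ * x₂)) ^ ζ₂) /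
    (ζ₁ * (β / α₀) ^ (ζ₁ - 1) - ζ₂ * (β / α₀) ^ (ζ₂ - 1))

set_option maxHeartbeats 1000000

/-- the key inequality above the barrier:
`(μA − δ)x₁ + (δ − μL)αx₂ + (μL − δ)G(αx₂, x₂; α) ≤ 0` whenever `α ≥ β₀*`,
`x₂ > 0` and `x₁ ≥ αx₂`. -/
theorem stmt_11 (μA μL δ σA σL ρ ζ₁ ζ₂ α₀ β₀ : ℝ)
    (hσA : 0 < σA) (hσL : 0 < σL) (hρ₁ : -1 < ρ) (hρ₂ : ρ < 1)
    (hμ : μL < μA) (hδ : μA < δ)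
    (hroot₁ : (1 / 2) * (σA ^ 2 + σL ^ 2 - 2 * ρ * σA * σL) * ζ₁ * (ζ₁ - 1)
      + (μA - μL) * ζ₁ + (μL - δ) = 0)
    (hroot₂ : (1 / 2) * (σA ^ 2 + σL ^ 2 - 2 * ρ * σA * σL) * ζ₂ * (ζ₂ - 1)
      + (μA - μL) * ζ₂ + (μL - δ) = 0)
    (hζlt : ζ₁ < ζ₂) (hζ₁ : ζ₁ < 0) (hζ₂ : 1 < ζ₂)
    (hα₀ : 0 < α₀)
    (hβ₀ : β₀ = α₀ * (ζ₁ * (ζ₁ - 1) / (ζ₂ * (ζ₂ - 1))) ^ (1 / (ζ₂ - ζ₁))) :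
    ∀ α : ℝ, β₀ ≤ α → ∀ x₂ : ℝ, 0 < x₂ → ∀ x₁ : ℝ, α * x₂ ≤ x₁ →
      (μA - δ) * x₁ + (δ - μL) * α * x₂
        + (μL - δ) * Gb α₀ ζ₁ ζ₂ α (α * x₂) x₂ ≤ 0 := by
  intro α hα x₂ hx₂ x₁ hx₁
  set c : ℝ := (σA ^ 2 + σL ^ 2 - 2 * ρ * σA * σL) / 2 with hc_def
  have hc : 0 < c := by
    rw [hc_def]; nlinarith [sq_nonneg (σA - σL), mul_pos hσA hσL]
  have hq1 : c * (ζ₁ * (ζ₁ - 1)) + (μA - μL) * ζ₁ + (μL - δ) = 0 := by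
    rw [hc_def]; linarith [hroot₁]
  have hq2 : c * (ζ₂ * (ζ₂ - 1)) + (μA - μL) * ζ₂ + (μL - δ) = 0 := by
    rw [hc_def]; linarith [hroot₂]
  have hζe : 0 < ζ₂ - ζ₁ := by linarith
  have hsum : ζ₁ + ζ₂ < 1 := by
    have hd : c * (ζ₁ + ζ₂ - 1) * (ζ₁ - ζ₂) = (μL - μA) * (ζ₁ - ζ₂) := by
      linear_combination hq1 - hq2
    have hs : c * (ζ₁ + ζ₂ - 1) = μL - μA :=
      mul_right_cancel₀ (sub_ne_zero.2 hζlt.ne) hd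
    by_contra h
    push_neg at h
    have : 0 ≤ c * (ζ₁ + ζ₂ - 1) := mul_nonneg hc.le (by linarith)
    rw [hs] at this; linarith
  have hK2 : 0 < ζ₂ * (ζ₂ - 1) := mul_pos (by linarith) (by linarith)
  have hK1 : ζ₂ * (ζ₂ - 1) < ζ₁ * (ζ₁ - 1) := by
    nlinarith [mul_pos_of_neg_of_neg (show ζ₁ - ζ₂ < 0 by linarith)
      (show ζ₁ + ζ₂ - 1 < 0 by linarith)]
  set K : ℝ := ζ₁ * (ζ₁ - 1) / (ζ₂ * (ζ₂ - 1)) with hK_def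
  have hK : 1 < K := (one_lt_div hK2).2 hK1
  have hKpos : 0 < K := by linarith
  have hβα : α₀ < β₀ := by
    rw [hβ₀]
    have : (1 : ℝ) < K ^ (1 / (ζ₂ - ζ₁)) :=
      (Real.one_lt_rpow_iff_of_pos hKpos).2 (Or.inl ⟨hK, by positivity⟩)
    have h2 := mul_lt_mul_of_pos_left this hα₀
    rw [mul_one] at h2; exact h2
  have hαpos : 0 < α := by linarith
  set r : ℝ := α / α₀ with hr_def
  have hr0 : 0 < r := by positivity
  have hr1 : 1 < r := (one_lt_div hα₀).2 (by linarith)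
  have hrK : K ^ (1 / (ζ₂ - ζ₁)) ≤ r := by
    rw [hr_def, le_div_iff₀ hα₀]
    rw [hβ₀] at hα; linarith
  have hre : K ≤ r ^ (ζ₂ - ζ₁) := by
    calc K = (K ^ (1 / (ζ₂ - ζ₁))) ^ (ζ₂ - ζ₁) := by
            rw [← Real.rpow_mul hKpos.le, one_div_mul_cancel hζe.ne', Real.rpow_one]
      _ ≤ r ^ (ζ₂ - ζ₁) := Real.rpow_le_rpow (by positivity) hrK hζe.le
  set a : ℝ := r ^ ζ₁ with ha_def
  set b : ℝ := r ^ ζ₂ with hb_def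
  have ha : 0 < a := Real.rpow_pos_of_pos hr0 _
  have hb : 0 < b := Real.rpow_pos_of_pos hr0 _
  have hba : b = a * r ^ (ζ₂ - ζ₁) := by
    rw [ha_def, hb_def, ← Real.rpow_add hr0]
    congr 1; ring
  -- key inequality
  have hkey : ζ₁ * (ζ₁ - 1) * a ≤ ζ₂ * (ζ₂ - 1) * b := by
    have h1 : K * a ≤ b := by
      rw [hba]
      exact mul_le_mul_of_nonneg_right hre ha.le |>.trans_eq (mul_comm _ _)
    have h2 : ζ₂ * (ζ₂ - 1) * (K * a) = ζ₁ * (ζ₁ - 1) * a := by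
      rw [hK_def]; field_simp
      rw [mul_assoc, mul_div_cancel_left₀ _ (by linarith : ζ₂ - 1 ≠ 0)]
    linarith [mul_le_mul_of_nonneg_left h1 hK2.le, h2]
  have hmain : (μA - μL) * (ζ₂ * b - ζ₁ * a) ≤ (δ - μL) * (b - a) := by
    have heq : (δ - μL) * (b - a) - (μA - μL) * (ζ₂ * b - ζ₁ * a)
        = c * (ζ₂ * (ζ₂ - 1)) * b - c * (ζ₁ * (ζ₁ - 1)) * a := by
      linear_combination a * hq1 - b * hq2
    linarith [mul_le_mul_of_nonneg_left hkey hc.le, heq]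
  -- compute Gb
  have hrα : α = α₀ * r := by rw [hr_def]; field_simp
  have hDneg : ζ₁ * a - ζ₂ * b < 0 := by
    linarith [mul_neg_of_neg_of_pos hζ₁ ha, mul_pos (show (0:ℝ) < ζ₂ by linarith) hb]
  have hGval : Gb α₀ ζ₁ ζ₂ α (α * x₂) x₂ = α₀ * x₂ * (a - b) * r / (ζ₁ * a - ζ₂ * b) := by
    unfold Gb
    rw [show α * x₂ / (α₀ * x₂) = r from by rw [mul_div_mul_right _ _ hx₂.ne']]
    rw [Real.rpow_sub hr0, Real.rpow_sub hr0, Real.rpow_one]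
    rw [show ζ₁ * (a / r) - ζ₂ * (b / r) = (ζ₁ * a - ζ₂ * b) / r from by ring]
    rw [div_div_eq_mul_div]
  rw [hGval]
  -- final assembly
  have hG : (μL - δ) * (α₀ * x₂ * (a - b) * r / (ζ₁ * a - ζ₂ * b)) ≤ (μL - μA) * α * x₂ := by
    rw [mul_comm (μL - δ), div_mul_eq_mul_div, div_le_iff_of_neg hDneg, hrα]
    nlinarith [mul_le_mul_of_nonneg_left hmain (by positivity : (0:ℝ) ≤ α₀ * x₂ * r)]
  have hx₁' : (μA - δ) * x₁ ≤ (μA - δ) * (α * x₂) :=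
    mul_le_mul_of_nonpos_left hx₁ (by linarith)
  linarith [hG, hx₁']
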